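/- Uniqueness of eigenvalues of ODECO tensors: if Σ_{i=1}^r λ_i a_i ∘ b_i ∘ c_i = Σ_{i=1}^r μ_i x_i ∘ y_i ∘ z_i where both decompositions are ODECO with strictly positive coefficients, then the multisets {λ_1, …, λ_r} and {μ_1, …, μ_r} coincide. -/
import Mathlib


open scoped BigOperators

open Finset


lemma ortho_sq {d r : ℕ} (v : Fin r → Fin d → ℝ)
    (hv : ∀ i j, (∑ p, v i p * v j p) = if i = j then (1:ℝ) else 0)
    (w : Fin r → ℝ) :
    ∑ p, (∑ j, w j * v j p)^2 = ∑ j, (w j)^2 := by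
  calc ∑ p, (∑ j, w j * v j p)^2
      = ∑ p, ∑ j, ∑ k, (w j * w k) * (v j p * v k p) := by
        refine Finset.sum_congr rfl fun p _ => ?_
        rw [sq, Finset.sum_mul_sum]
        exact Finset.sum_congr rfl fun j _ => Finset.sum_congr rfl fun k _ => by ring
    _ = ∑ j, ∑ k, (w j * w k) * ∑ p, v j p * v k p := by
        rw [Finset.sum_comm]
        refine Finset.sum_congr rfl fun j _ => ?_
        rw [Finset.sum_comm]
        exact Finset.sum_congr rfl fun k _ => (Finset.mul_sum _ _ _).symm
    _ = ∑ j, (w j)^2 := by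
        refine Finset.sum_congr rfl fun j _ => ?_
        simp_rw [hv, mul_ite, mul_one, mul_zero, Finset.sum_ite_eq]
        simp [sq]

lemma bessel {d r : ℕ} (v : Fin r → Fin d → ℝ)
    (hv : ∀ i j, (∑ p, v i p * v j p) = if i = j then (1:ℝ) else 0)
    (u : Fin d → ℝ) (hu : (∑ p, u p * u p) = 1) :
    ∑ j, (∑ p, u p * v j p)^2 ≤ 1 := by
  set R : Fin r → ℝ := fun j => ∑ p, u p * v j p with hR
  have key : (0:ℝ) ≤ ∑ p, (u p - ∑ j, R j * v j p)^2 :=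
    Finset.sum_nonneg fun p _ => sq_nonneg _
  have expand : ∑ p, (u p - ∑ j, R j * v j p)^2
      = 1 - ∑ j, (R j)^2 := by
    have h1 : ∀ p, (u p - ∑ j, R j * v j p)^2
        = u p * u p - 2 * (u p * ∑ j, R j * v j p) + (∑ j, R j * v j p)^2 := by
      intro p; ring
    simp_rw [h1]
    rw [Finset.sum_add_distrib, Finset.sum_sub_distrib, hu, ortho_sq v hv R]
    have h2 : ∑ p, u p * ∑ j, R j * v j p = ∑ j, (R j)^2 := by
      calc ∑ p, u p * ∑ j, R j * v j p
          = ∑ p, ∑ j, R j * (u p * v j p) := by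
            refine Finset.sum_congr rfl fun p _ => ?_
            rw [Finset.mul_sum]
            exact Finset.sum_congr rfl fun j _ => by ring
        _ = ∑ j, R j * ∑ p, u p * v j p := by
            rw [Finset.sum_comm]
            exact Finset.sum_congr rfl fun j _ => (Finset.mul_sum _ _ _).symm
        _ = ∑ j, (R j)^2 := by
            refine Finset.sum_congr rfl fun j _ => ?_
            change R j * R j = R j ^ 2
            ring
    rw [← Finset.mul_sum, h2]; ring
  linarith [key, expand ▸ key]



lemma swap4 {d r : ℕ} (F : Fin d → Fin d → Fin d → Fin r → ℝ) :
    ∑ p, ∑ q, ∑ s, ∑ j, F p q s j = ∑ j, ∑ p, ∑ q, ∑ s, F p q s j :=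
  calc ∑ p, ∑ q, ∑ s, ∑ j, F p q s j
      = ∑ p, ∑ q, ∑ j, ∑ s, F p q s j :=
        Finset.sum_congr rfl fun p _ => Finset.sum_congr rfl fun q _ => Finset.sum_comm
    _ = ∑ p, ∑ j, ∑ q, ∑ s, F p q s j :=
        Finset.sum_congr rfl fun p _ => Finset.sum_comm
    _ = ∑ j, ∑ p, ∑ q, ∑ s, F p q s j := Finset.sum_comm

lemma rearrange {d r : ℕ} (u v w : Fin d → ℝ) (t : Fin r → ℝ) (f g h : Fin r → Fin d → ℝ) :
    ∑ p, ∑ q, ∑ s, (u p * v q * w s) * (∑ j, t j * (f j p * g j q * h j s))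
    = ∑ j, t j * ((∑ p, u p * f j p) * (∑ q, v q * g j q) * (∑ s, w s * h j s)) := by
  have key : ∀ j : Fin r, t j * ((∑ p, u p * f j p) * (∑ q, v q * g j q) * (∑ s, w s * h j s))
      = ∑ p, ∑ q, ∑ s, (u p * v q * w s) * (t j * (f j p * g j q * h j s)) := by
    intro j
    set Q := ∑ q, v q * g j q with hQ
    set R := ∑ s, w s * h j s with hR
    have e1 : t j * ((∑ p, u p * f j p) * Q * R)
        = ∑ p, (u p * f j p) * (t j * (Q * R)) := by
      rw [← Finset.sum_mul]; ring
    rw [e1]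
    refine Finset.sum_congr rfl fun p _ => ?_
    have e2 : (u p * f j p) * (t j * (Q * R))
        = ∑ q, (v q * g j q) * ((u p * f j p) * t j * R) := by
      rw [← Finset.sum_mul, ← hQ]; ring
    rw [e2]
    refine Finset.sum_congr rfl fun q _ => ?_
    have e3 : (v q * g j q) * ((u p * f j p) * t j * R)
        = ∑ s, (w s * h j s) * ((v q * g j q) * ((u p * f j p) * t j)) := by
      rw [← Finset.sum_mul, ← hR]; ring
    rw [e3]
    exact Finset.sum_congr rfl fun s _ => by ring
  simp_rw [key]
  simp_rw [Finset.mul_sum]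
  exact swap4 _

lemma contract {d r : ℕ} (lam mu : Fin r → ℝ)
    (a b c x y z : Fin r → Fin d → ℝ)
    (ha : ∀ i j, (∑ p, a i p * a j p) = if i = j then (1 : ℝ) else 0)
    (hb : ∀ i j, (∑ p, b i p * b j p) = if i = j then (1 : ℝ) else 0)
    (hc : ∀ i j, (∑ p, c i p * c j p) = if i = j then (1 : ℝ) else 0)
    (heq : ∀ p q s, (∑ i, lam i * (a i p * b i q * c i s))
        = ∑ i, mu i * (x i p * y i q * z i s)) (i : Fin r) :
    lam i = ∑ j, mu j * ((∑ p, a i p * x j p) * (∑ q, b i q * y j q) * (∑ s, c i s * z j s)) := by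
  have h1 : ∑ p, ∑ q, ∑ s, (a i p * b i q * c i s) * (∑ j, lam j * (a j p * b j q * c j s))
      = lam i := by
    rw [rearrange]
    simp_rw [ha i, hb i, hc i]
    rw [Finset.sum_eq_single i]
    · simp
    · intro j _ hj
      simp [Ne.symm hj]
    · simp
  have h2 := rearrange (a i) (b i) (c i) mu x y z
  rw [← h2, ← h1]
  refine Finset.sum_congr rfl fun p _ => Finset.sum_congr rfl fun q _ =>
    Finset.sum_congr rfl fun s _ => ?_
  rw [heq]



lemma tail_le {r : ℕ} (lam mu : Fin r → ℝ) (K : Fin r → Fin r → ℝ)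
    (hmu0 : ∀ j, 0 ≤ mu j) (hmono : Monotone mu)
    (hrow : ∀ i, ∑ j, |K i j| ≤ 1) (hcol : ∀ j, ∑ i, |K i j| ≤ 1)
    (h1 : ∀ i, lam i = ∑ j, K i j * mu j) (k : Fin r) :
    ∑ i ∈ univ.filter (fun i => k ≤ i), lam i
      ≤ ∑ j ∈ univ.filter (fun j => k ≤ j), mu j := by
  set S : Finset (Fin r) := univ.filter (fun i => k ≤ i) with hS
  set c : Fin r → ℝ := fun j => ∑ i ∈ S, |K i j| with hcdef
  set t : ℝ := mu k with htdef
  have ht0 : 0 ≤ t := hmu0 k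
  have hc0 : ∀ j, 0 ≤ c j := fun j => Finset.sum_nonneg fun i _ => abs_nonneg _
  have hc1 : ∀ j, c j ≤ 1 := fun j =>
    le_trans (Finset.sum_le_sum_of_subset_of_nonneg (Finset.subset_univ S)
      (fun i _ _ => abs_nonneg _)) (hcol j)
  have hcsum : ∑ j, c j ≤ (S.card : ℝ) := by
    rw [hcdef]
    rw [Finset.sum_comm]
    calc ∑ i ∈ S, ∑ j, |K i j| ≤ ∑ _i ∈ S, (1:ℝ) :=
          Finset.sum_le_sum fun i _ => hrow i
      _ = (S.card : ℝ) := by simp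
  have step1 : ∑ i ∈ S, lam i = ∑ j, (∑ i ∈ S, K i j) * mu j := by
    simp_rw [h1]
    rw [Finset.sum_comm]
    exact Finset.sum_congr rfl fun j _ => (Finset.sum_mul _ _ _).symm
  have step2 : ∑ j, (∑ i ∈ S, K i j) * mu j ≤ ∑ j, c j * mu j := by
    refine Finset.sum_le_sum fun j _ => mul_le_mul_of_nonneg_right ?_ (hmu0 j)
    exact Finset.sum_le_sum fun i _ => le_abs_self _
  have step3 : ∑ j, c j * mu j ≤ ∑ j, (c j * t + (if k ≤ j then mu j - t else 0)) := by
    refine Finset.sum_le_sum fun j _ => ?_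
    by_cases h : k ≤ j
    · rw [if_pos h]
      have hjt : t ≤ mu j := hmono h
      nlinarith [hc1 j, hc0 j]
    · rw [if_neg h]
      have hjt : mu j ≤ t := hmono (le_of_not_ge h)
      nlinarith [hc0 j]
  have step4 : ∑ j, (c j * t + (if k ≤ j then mu j - t else 0))
      = (∑ j, c j) * t + (∑ j ∈ S, mu j - (S.card : ℝ) * t) := by
    rw [Finset.sum_add_distrib, ← Finset.sum_mul, ← Finset.sum_filter]
    rw [Finset.sum_sub_distrib]
    simp [hS, mul_comm]
  have step5 : (∑ j, c j) * t ≤ (S.card : ℝ) * t :=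
    mul_le_mul_of_nonneg_right hcsum ht0
  calc ∑ i ∈ S, lam i = ∑ j, (∑ i ∈ S, K i j) * mu j := step1
    _ ≤ ∑ j, c j * mu j := step2
    _ ≤ ∑ j, (c j * t + (if k ≤ j then mu j - t else 0)) := step3
    _ = (∑ j, c j) * t + (∑ j ∈ S, mu j - (S.card : ℝ) * t) := step4
    _ ≤ ∑ j ∈ S, mu j := by linarith

lemma tails_eq_imp {r : ℕ} (f g : Fin r → ℝ)
    (h : ∀ k : Fin r, ∑ i ∈ univ.filter (fun i => k ≤ i), f i
        = ∑ i ∈ univ.filter (fun i => k ≤ i), g i) :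
    ∀ k, f k = g k := by
  intro k
  have split : ∀ (F : Fin r → ℝ), ∑ i ∈ univ.filter (fun i => k ≤ i), F i
      = F k + ∑ i ∈ univ.filter (fun i => k < i), F i := by
    intro F
    rw [Finset.sum_filter, Finset.sum_filter]
    have : ∀ j : Fin r, (if k ≤ j then F j else 0)
        = (if k = j then F j else 0) + (if k < j then F j else 0) := by
      intro j
      rcases lt_trichotomy k j with h' | h' | h'
      · rw [if_pos h'.le, if_neg h'.ne, if_pos h', zero_add]
      · rw [if_pos h'.le, if_pos h', if_neg (lt_irrefl _ ∘ (h' ▸ ·)), add_zero]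
      · rw [if_neg (not_le.mpr h'), if_neg (h'.ne' ), if_neg (asymm h'), add_zero]
    simp_rw [this]
    rw [Finset.sum_add_distrib, Finset.sum_ite_eq]
    simp
  have hlt : ∑ i ∈ univ.filter (fun i => k < i), f i
      = ∑ i ∈ univ.filter (fun i => k < i), g i := by
    by_cases hk : (k : ℕ) + 1 < r
    · have : ∀ j : Fin r, k < j ↔ (⟨(k:ℕ)+1, hk⟩ : Fin r) ≤ j := by
        intro j
        rw [Fin.lt_def, Fin.le_def]
        simp only []
        omega
      have hfe : (univ.filter (fun i : Fin r => k < i))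
          = univ.filter (fun i => (⟨(k:ℕ)+1, hk⟩ : Fin r) ≤ i) := by
        apply Finset.filter_congr
        intro j _
        simp [this j]
      rw [hfe]
      exact h _
    · have hempty : univ.filter (fun i : Fin r => k < i) = ∅ := by
        rw [Finset.filter_eq_empty_iff]
        intro j _
        rw [Fin.lt_def]
        omega
      rw [hempty]
      simp
  have := h k
  rw [split f, split g, hlt] at this
  linarith


lemma key_perm {r : ℕ} (lam mu : Fin r → ℝ) (K : Fin r → Fin r → ℝ)
    (hlam0 : ∀ i, 0 ≤ lam i) (hmu0 : ∀ j, 0 ≤ mu j)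
    (hrow : ∀ i, ∑ j, |K i j| ≤ 1) (hcol : ∀ j, ∑ i, |K i j| ≤ 1)
    (h1 : ∀ i, lam i = ∑ j, K i j * mu j)
    (h2 : ∀ j, mu j = ∑ i, K i j * lam i) :
    ∃ σ : Equiv.Perm (Fin r), ∀ i, mu (σ i) = lam i := by
  set σL := Tuple.sort lam with hσL
  set σM := Tuple.sort mu with hσM
  set lam' : Fin r → ℝ := lam ∘ σL with hlam'
  set mu' : Fin r → ℝ := mu ∘ σM with hmu'
  have hmonoL : Monotone lam' := Tuple.monotone_sort lam
  have hmonoM : Monotone mu' := Tuple.monotone_sort mu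
  set K' : Fin r → Fin r → ℝ := fun i j => K (σL i) (σM j) with hK'
  have h1' : ∀ i, lam' i = ∑ j, K' i j * mu' j := by
    intro i
    calc lam' i = ∑ j, K (σL i) j * mu j := h1 (σL i)
      _ = ∑ j, K' i j * mu' j :=
        (Equiv.sum_comp σM (fun j => K (σL i) j * mu j)).symm
  have h2' : ∀ j, mu' j = ∑ i, K' i j * lam' i := by
    intro j
    calc mu' j = ∑ i, K i (σM j) * lam i := h2 (σM j)
      _ = ∑ i, K' i j * lam' i :=
        (Equiv.sum_comp σL (fun i => K i (σM j) * lam i)).symm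
  have hrow' : ∀ i, ∑ j, |K' i j| ≤ 1 := fun i =>
    le_of_eq_of_le (Equiv.sum_comp σM (fun j => |K (σL i) j|)) (hrow (σL i))
  have hcol' : ∀ j, ∑ i, |K' i j| ≤ 1 := fun j =>
    le_of_eq_of_le (Equiv.sum_comp σL (fun i => |K i (σM j)|)) (hcol (σM j))
  have heq' : ∀ i, lam' i = mu' i := by
    apply tails_eq_imp
    intro k
    have hA := tail_le lam' mu' K' (fun j => hmu0 _) hmonoM hrow' hcol' h1' k
    have hB := tail_le mu' lam' (fun j i => K' i j) (fun i => hlam0 _) hmonoL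
      (fun j => hcol' j) (fun i => hrow' i) h2' k
    linarith
  refine ⟨σL.symm.trans σM, fun i => ?_⟩
  have := heq' (σL.symm i)
  simp only [hlam', hmu', Function.comp_apply, Equiv.apply_symm_apply] at this
  simpa using this.symm

lemma cs_bound {r : ℕ} (s t : Fin r → ℝ)
    (hs : ∑ j, (s j)^2 ≤ 1) (ht : ∑ j, (t j)^2 ≤ 1) :
    ∑ j, |s j| * |t j| ≤ 1 := by
  have h := Finset.sum_mul_sq_le_sq_mul_sq univ (fun j => |s j|) (fun j => |t j|)
  simp_rw [sq_abs] at h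
  have hnn : 0 ≤ ∑ j, |s j| * |t j| :=
    Finset.sum_nonneg fun j _ => mul_nonneg (abs_nonneg _) (abs_nonneg _)
  have hs0 : 0 ≤ ∑ j, (s j)^2 := Finset.sum_nonneg fun j _ => sq_nonneg _
  have ht0 : 0 ≤ ∑ j, (t j)^2 := Finset.sum_nonneg fun j _ => sq_nonneg _
  nlinarith


/-- Uniqueness of eigenvalues of ODECO tensors: if two ODECO decompositions
with strictly positive coefficients represent the same third-order tensor, then the
multisets of coefficients coincide (i.e., they agree up to a permutation). -/
theorem odeco_eigenvalues_unique
    (d r : ℕ) (lam mu : Fin r → ℝ)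
    (a b c x y z : Fin r → Fin d → ℝ)
    (hlam : ∀ i, 0 < lam i) (hmu : ∀ i, 0 < mu i)
    (ha : ∀ i j, (∑ p, a i p * a j p) = if i = j then (1 : ℝ) else 0)
    (hb : ∀ i j, (∑ p, b i p * b j p) = if i = j then (1 : ℝ) else 0)
    (hc : ∀ i j, (∑ p, c i p * c j p) = if i = j then (1 : ℝ) else 0)
    (hx : ∀ i j, (∑ p, x i p * x j p) = if i = j then (1 : ℝ) else 0)
    (hy : ∀ i j, (∑ p, y i p * y j p) = if i = j then (1 : ℝ) else 0)
    (hz : ∀ i j, (∑ p, z i p * z j p) = if i = j then (1 : ℝ) else 0)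
    (heq : ∀ p q s, (∑ i, lam i * (a i p * b i q * c i s))
        = ∑ i, mu i * (x i p * y i q * z i s)) :
    ∃ σ : Equiv.Perm (Fin r), ∀ i, mu (σ i) = lam i := by
  have hcomm : ∀ (u w : Fin d → ℝ), ∑ p, u p * w p = ∑ p, w p * u p :=
    fun u w => Finset.sum_congr rfl fun p _ => mul_comm _ _
  set P : Fin r → Fin r → ℝ := fun i j => ∑ p, a i p * x j p with hP
  set Q : Fin r → Fin r → ℝ := fun i j => ∑ q, b i q * y j q with hQ
  set R : Fin r → Fin r → ℝ := fun i j => ∑ s, c i s * z j s with hR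
  set K : Fin r → Fin r → ℝ := fun i j => P i j * Q i j * R i j with hK
  -- Bessel bounds
  have hPr : ∀ i, ∑ j, (P i j)^2 ≤ 1 := fun i =>
    bessel x hx (a i) (by simpa using ha i i)
  have hQr : ∀ i, ∑ j, (Q i j)^2 ≤ 1 := fun i =>
    bessel y hy (b i) (by simpa using hb i i)
  have hRr : ∀ i, ∑ j, (R i j)^2 ≤ 1 := fun i =>
    bessel z hz (c i) (by simpa using hc i i)
  have hPc : ∀ j, ∑ i, (P i j)^2 ≤ 1 := by
    intro j
    have := bessel a ha (x j) (by simpa using hx j j)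
    calc ∑ i, (P i j)^2 = ∑ i, (∑ p, x j p * a i p)^2 := by
          refine Finset.sum_congr rfl fun i _ => ?_
          rw [hP]; rw [hcomm]
      _ ≤ 1 := this
  have hQc : ∀ j, ∑ i, (Q i j)^2 ≤ 1 := by
    intro j
    have := bessel b hb (y j) (by simpa using hy j j)
    calc ∑ i, (Q i j)^2 = ∑ i, (∑ q, y j q * b i q)^2 := by
          refine Finset.sum_congr rfl fun i _ => ?_
          rw [hQ]; rw [hcomm]
      _ ≤ 1 := this
  have hRabs : ∀ i j, |R i j| ≤ 1 := by
    intro i j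
    have h1 : (R i j)^2 ≤ 1 :=
      le_trans (Finset.single_le_sum (fun j _ => sq_nonneg (R i j)) (mem_univ j)) (hRr i)
    have := abs_nonneg (R i j)
    nlinarith [sq_abs (R i j)]
  have hrow : ∀ i, ∑ j, |K i j| ≤ 1 := by
    intro i
    calc ∑ j, |K i j| ≤ ∑ j, |P i j| * |Q i j| := by
          refine Finset.sum_le_sum fun j _ => ?_
          rw [hK, abs_mul, abs_mul]
          have h1 : 0 ≤ |P i j| * |Q i j| := mul_nonneg (abs_nonneg _) (abs_nonneg _)
          nlinarith [hRabs i j, abs_nonneg (R i j)]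
      _ ≤ 1 := cs_bound _ _ (hPr i) (hQr i)
  have hcol : ∀ j, ∑ i, |K i j| ≤ 1 := by
    intro j
    calc ∑ i, |K i j| ≤ ∑ i, |P i j| * |Q i j| := by
          refine Finset.sum_le_sum fun i _ => ?_
          rw [hK, abs_mul, abs_mul]
          have h1 : 0 ≤ |P i j| * |Q i j| := mul_nonneg (abs_nonneg _) (abs_nonneg _)
          nlinarith [hRabs i j, abs_nonneg (R i j)]
      _ ≤ 1 := cs_bound (fun i => P i j) (fun i => Q i j) (hPc j) (hQc j)
  have h1 : ∀ i, lam i = ∑ j, K i j * mu j := by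
    intro i
    rw [contract lam mu a b c x y z ha hb hc heq i]
    exact Finset.sum_congr rfl fun j _ => mul_comm _ _
  have h2 : ∀ j, mu j = ∑ i, K i j * lam i := by
    intro j
    rw [contract mu lam x y z a b c hx hy hz (fun p q s => (heq p q s).symm) j]
    refine Finset.sum_congr rfl fun i _ => ?_
    rw [hK, hP, hQ, hR]
    simp only []
    rw [hcomm (x j) (a i), hcomm (y j) (b i), hcomm (z j) (c i)]
    ring
  exact key_perm lam mu K (fun i => (hlam i).le) (fun j => (hmu j).le) hrow hcol h1 h2
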